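/- Assume that every simple graph on 25 vertices contains a 4-clique or an independent 5-set (i.e., R(4,5) ≤ 25). Let F be a simple graph on 48 vertices containing no 5-clique and no independent 5-set. Then either F has a vertex of degree 24 adjacent in F to at least 12 vertices of degree 24 in F, or the complement of F has a vertex of degree 24 in the complement adjacent in the complement to at least 12 vertices of degree 24 in the complement. -/

import Mathlib

open Finset

lemma deg_le_24 (hR45 : ∀ G : SimpleGraph (Fin 25),
      (∃ s : Finset (Fin 25), G.IsNClique 4 s) ∨ (∃ s : Finset (Fin 25), Gᶜ.IsNClique 5 s))
    (H : SimpleGraph (Fin 48)) [DecidableRel H.Adj]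
    (h5 : H.CliqueFree 5) (hi : Hᶜ.CliqueFree 5) (v : Fin 48) :
    H.degree v ≤ 24 := by
  by_contra h
  push_neg at h
  obtain ⟨t, hts, htc⟩ := (H.neighborFinset v).exists_subset_card_eq (n := 25) (by rw [SimpleGraph.card_neighborFinset_eq_degree]; omega)
  set f : Fin 25 ↪ Fin 48 := (t.orderEmbOfFin htc).toEmbedding with hf
  have hmem : ∀ i, H.Adj v (f i) := fun i => by
    have := hts (t.orderEmbOfFin_mem htc i)
    rwa [SimpleGraph.mem_neighborFinset] at this
  have hcompl : (H.comap f)ᶜ = Hᶜ.comap f := by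
    ext x y
    simp only [SimpleGraph.compl_adj, SimpleGraph.comap_adj, ne_eq, f.injective.ne_iff]
  rcases hR45 (H.comap f) with ⟨s, hs⟩ | ⟨s, hs⟩
  · have hmap : H.IsNClique 4 (s.image f) := by
      constructor
      · rintro x hx y hy hxy
        simp only [coe_image, Set.mem_image, mem_coe] at hx hy
        obtain ⟨a, ha, rfl⟩ := hx
        obtain ⟨b, hb, rfl⟩ := hy
        exact hs.1 ha hb (fun e => hxy (by rw [e]))
      · rw [Finset.card_image_of_injective _ f.injective, hs.2]
    have : H.IsNClique 5 (insert v (s.image f)) := by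
      refine hmap.insert fun b hb => ?_
      obtain ⟨a, _, rfl⟩ := Finset.mem_image.mp hb
      exact hmem a
    exact h5 _ this
  · rw [hcompl] at hs
    exact (hi.comap (SimpleGraph.Embedding.comap f Hᶜ).isContained) s hs

/-- Assuming R(4,5) ≤ 25, every (5,5)-Ramsey graph F on 48 vertices has, in F
or in its complement, a vertex of degree 24 adjacent to at least 12 vertices
of degree 24 (degrees and adjacency taken in the same graph). -/
theorem ramsey55_48_exists_good_vertex
    (hR45 : ∀ G : SimpleGraph (Fin 25),
      (∃ s : Finset (Fin 25), G.IsNClique 4 s) ∨ (∃ s : Finset (Fin 25), Gᶜ.IsNClique 5 s))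
    (F : SimpleGraph (Fin 48)) [DecidableRel F.Adj]
    (h5 : F.CliqueFree 5) (hi : Fᶜ.CliqueFree 5) :
    (∃ a, F.degree a = 24 ∧
      12 ≤ ((F.neighborFinset a).filter fun w => F.degree w = 24).card) ∨
    (∃ a, Fᶜ.degree a = 24 ∧
      12 ≤ ((Fᶜ.neighborFinset a).filter fun w => Fᶜ.degree w = 24).card) := by
  classical
  by_contra hcon
  push_neg at hcon
  obtain ⟨hA, hB⟩ := hcon
  have degF : ∀ v, F.degree v ≤ 24 := deg_le_24 hR45 F h5 hi
  have degFc : ∀ v, Fᶜ.degree v ≤ 24 := deg_le_24 hR45 Fᶜ hi (by simpa using h5)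
  have hdsum : ∀ v, Fᶜ.degree v = 47 - F.degree v := fun v => by
    rw [SimpleGraph.degree_compl, Fintype.card_fin]
  have hd23 : ∀ v, 23 ≤ F.degree v := fun v => by
    have h1 := degFc v; have h2 := degF v; rw [hdsum v] at h1; omega
  have hdc : ∀ w, Fᶜ.degree w = 24 ↔ ¬ F.degree w = 24 := fun w => by
    have h1 := degF w; have h2 := hd23 w; rw [hdsum w]; omega
  set A := Finset.univ.filter (fun v => F.degree v = 24) with hAdef
  set B := Finset.univ.filter (fun v => ¬ F.degree v = 24) with hBdef
  have hABcard : A.card + B.card = 48 := by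
    rw [hAdef, hBdef, Finset.card_filter_add_card_filter_not]
    simp
  have hx : ∀ a ∈ A, 13 ≤ (B.filter fun b => F.Adj a b).card := by
    intro a ha
    rw [hAdef, Finset.mem_filter] at ha
    have hda := ha.2
    have h1 := hA a hda
    have h2 : ((F.neighborFinset a).filter fun w => F.degree w = 24).card
        + ((F.neighborFinset a).filter fun w => ¬ F.degree w = 24).card = 24 := by
      rw [Finset.card_filter_add_card_filter_not]
      rw [F.card_neighborFinset_eq_degree]; exact hda
    have h3 : ((F.neighborFinset a).filter fun w => ¬ F.degree w = 24)
        = B.filter fun b => F.Adj a b := by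
      ext w
      simp only [Finset.mem_filter, SimpleGraph.mem_neighborFinset, hBdef,
        Finset.mem_univ, true_and]
      exact and_comm
    have h3c := congrArg Finset.card h3
    omega
  have hy : ∀ b ∈ B, (A.filter fun a => F.Adj b a).card + 13 ≤ A.card := by
    intro b hb
    rw [hBdef, Finset.mem_filter] at hb
    have hdb : Fᶜ.degree b = 24 := (hdc b).mpr hb.2
    have h1 := hB b hdb
    have h2 : ((Fᶜ.neighborFinset b).filter fun w => Fᶜ.degree w = 24).card
        + ((Fᶜ.neighborFinset b).filter fun w => ¬ Fᶜ.degree w = 24).card = 24 := by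
      rw [Finset.card_filter_add_card_filter_not]
      rw [Fᶜ.card_neighborFinset_eq_degree]; exact hdb
    have h3 : ((Fᶜ.neighborFinset b).filter fun w => ¬ Fᶜ.degree w = 24)
        = A.filter fun a => Fᶜ.Adj b a := by
      ext w
      simp only [Finset.mem_filter, SimpleGraph.mem_neighborFinset, hdc, not_not,
        hAdef, Finset.mem_univ, true_and]
      exact and_comm
    have h3c := congrArg Finset.card h3
    have h4 : 13 ≤ (A.filter fun a => Fᶜ.Adj b a).card := by omega
    have h5' : (A.filter fun a => F.Adj b a).card
        + (A.filter fun a => ¬ F.Adj b a).card = A.card :=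
      Finset.card_filter_add_card_filter_not _
    have h6 : (A.filter fun a => Fᶜ.Adj b a).card ≤ (A.filter fun a => ¬ F.Adj b a).card := by
      apply Finset.card_le_card
      intro a ha
      rw [Finset.mem_filter] at ha ⊢
      exact ⟨ha.1, ha.2.2⟩
    omega
  have hE : ∑ a ∈ A, (B.filter fun b => F.Adj a b).card
      = ∑ b ∈ B, (A.filter fun a => F.Adj b a).card := by
    simp_rw [Finset.card_filter]
    rw [Finset.sum_comm]
    exact Finset.sum_congr rfl fun b _ => Finset.sum_congr rfl fun a _ => by simp only [F.adj_comm a b]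
  have hlow : A.card * 13 ≤ ∑ a ∈ A, (B.filter fun b => F.Adj a b).card := by
    simpa using Finset.card_nsmul_le_sum A _ 13 hx
  have hup : ∑ b ∈ B, ((A.filter fun a => F.Adj b a).card + 13) ≤ B.card * A.card := by
    simpa using Finset.sum_le_card_nsmul B _ A.card hy
  rw [Finset.sum_add_distrib, Finset.sum_const, smul_eq_mul] at hup
  have key : A.card * 13 + B.card * 13 ≤ B.card * A.card := by omega
  have hxy : (A.card : ℤ) + B.card = 48 := by exact_mod_cast hABcard
  have hprod : (A.card : ℤ) * 13 + (B.card : ℤ) * 13 ≤ (B.card : ℤ) * A.card := by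
    exact_mod_cast key
  nlinarith [sq_nonneg ((A.card : ℤ) - (B.card : ℤ))]
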